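/- For π ⊢ [n], the crossing number satisfies crs(π) = n² ∫_{Δ²} 1[x₁<x₂<y₁<y₂] dμ_π(x₁,y₁) dμ_π(x₂,y₂) − (1/4)d(π) − (1/2)·#{adjacent pairs of arcs of π}, where a pair of arcs (i,j),(k,l) is adjacent if j = k. -/

import Mathlib

open scoped BigOperators
open Finset Classical

/-- Two indices lie in the same block of the set partition `P` of `[n]`. -/
def SameBlock {n : ℕ} (P : Finpartition (Finset.univ : Finset (Fin n))) (i j : Fin n) : Prop :=
  ∃ B ∈ P.parts, i ∈ B ∧ j ∈ B

/-- `(i,j)` is an arc of `P`: same block, `i < j`, no element of that block strictly between. -/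
def IsArc {n : ℕ} (P : Finpartition (Finset.univ : Finset (Fin n))) (i j : Fin n) : Prop :=
  i < j ∧ SameBlock P i j ∧ ∀ k : Fin n, i < k → k < j → ¬ SameBlock P i k

/-- The set of arcs `D(π)`. -/
noncomputable def arcs {n : ℕ} (P : Finpartition (Finset.univ : Finset (Fin n))) :
    Finset (Fin n × Fin n) :=
  Finset.univ.filter (fun p => IsArc P p.1 p.2)

/-- `d(π)`, the number of arcs. -/
noncomputable def dP {n : ℕ} (P : Finpartition (Finset.univ : Finset (Fin n))) : ℕ :=
  (arcs P).card

/-- `dim(π) = Σ_{(i,j) ∈ D(π)} (j - i)`. -/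
noncomputable def dimP {n : ℕ} (P : Finpartition (Finset.univ : Finset (Fin n))) : ℕ :=
  ∑ p ∈ arcs P, (p.2.val - p.1.val)

/-- `crs(π)`, the number of crossings, i.e. pairs of arcs `(i,j), (k,l)` with `i<k<j<l`. -/
noncomputable def crsP {n : ℕ} (P : Finpartition (Finset.univ : Finset (Fin n))) : ℕ :=
  (((arcs P) ×ˢ (arcs P)).filter
    (fun q => q.1.1 < q.2.1 ∧ q.2.1 < q.1.2 ∧ q.1.2 < q.2.2)).card

/-- `(i,j)` is a `π`-singular pair. -/
def SingularPair {n : ℕ} (P : Finpartition (Finset.univ : Finset (Fin n))) (i j : Fin n) : Prop :=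
  i < j ∧ ((∃ k : Fin n, k < i ∧ IsArc P k j) ∨ (∃ l : Fin n, j < l ∧ IsArc P i l))

/-- `(i,j)` is a `π`-regular pair. -/
def RegularPair {n : ℕ} (P : Finpartition (Finset.univ : Finset (Fin n))) (i j : Fin n) : Prop :=
  i < j ∧ ¬ ((∃ k : Fin n, k < i ∧ IsArc P k j) ∨ (∃ l : Fin n, j < l ∧ IsArc P i l))

/-- The set `Sing(π)` of singular pairs. -/
noncomputable def singP {n : ℕ} (P : Finpartition (Finset.univ : Finset (Fin n))) :
    Finset (Fin n × Fin n) :=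
  Finset.univ.filter (fun p => SingularPair P p.1 p.2)

/-- The set `reg(π)` of regular pairs. -/
noncomputable def regP {n : ℕ} (P : Finpartition (Finset.univ : Finset (Fin n))) :
    Finset (Fin n × Fin n) :=
  Finset.univ.filter (fun p => RegularPair P p.1 p.2)

open MeasureTheory

/-- The square `A_{i,j} = [(i−1)/n, i/n] × [(j−1)/n, j/n]` (0-indexed: `p.1 = i−1`). -/
noncomputable def sqA (n : ℕ) (p : Fin n × Fin n) : Set (ℝ × ℝ) :=
  Set.Icc ((p.1 : ℝ) / n) (((p.1 : ℝ) + 1) / n) ×ˢ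
    Set.Icc ((p.2 : ℝ) / n) (((p.2 : ℝ) + 1) / n)

/-- The measure `μ_π = (1/n) Σ_{(i,j)∈D(π)} λ_{A_{i,j}}`. -/
noncomputable def muPi {n : ℕ} (P : Finpartition (Finset.univ : Finset (Fin n))) :
    Measure (ℝ × ℝ) :=
  (n : ENNReal) • ∑ p ∈ arcs P, volume.restrict (sqA n p)

/-- Number of (ordered, hence unordered) adjacent pairs of arcs `(i,j),(k,l)` with `j = k`. -/
noncomputable def adjP {n : ℕ} (P : Finpartition (Finset.univ : Finset (Fin n))) : ℕ :=
  (((arcs P) ×ˢ (arcs P)).filter (fun q => q.1.2 = q.2.1)).card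


noncomputable section
open Set

def S4 : Set ((ℝ×ℝ)×(ℝ×ℝ)) := {q | q.1.1 < q.2.1 ∧ q.2.1 < q.1.2 ∧ q.1.2 < q.2.2}

lemma measS4 : MeasurableSet S4 := by
  have h : S4 = {q : (ℝ×ℝ)×(ℝ×ℝ) | q.1.1 < q.2.1} ∩
      ({q : (ℝ×ℝ)×(ℝ×ℝ) | q.2.1 < q.1.2} ∩ {q : (ℝ×ℝ)×(ℝ×ℝ) | q.1.2 < q.2.2}) := rfl
  rw [h]
  exact (measurableSet_lt (measurable_fst.fst) (measurable_snd.fst)).inter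
    ((measurableSet_lt (measurable_snd.fst) (measurable_fst.snd)).inter
      (measurableSet_lt (measurable_fst.snd) (measurable_snd.snd)))

lemma null_x1 (r : ℝ) : volume {q : (ℝ×ℝ)×(ℝ×ℝ) | q.1.1 = r} = 0 := by
  have h : {q : (ℝ×ℝ)×(ℝ×ℝ) | q.1.1 = r} = (({r} : Set ℝ) ×ˢ (Set.univ : Set ℝ)) ×ˢ (Set.univ : Set (ℝ×ℝ)) := by
    ext ⟨⟨x1,y1⟩,q2⟩; simp [eq_comm]
  rw [h, Measure.volume_eq_prod, Measure.prod_prod, Measure.volume_eq_prod, Measure.prod_prod]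
  simp

lemma null_y1 (r : ℝ) : volume {q : (ℝ×ℝ)×(ℝ×ℝ) | q.1.2 = r} = 0 := by
  have h : {q : (ℝ×ℝ)×(ℝ×ℝ) | q.1.2 = r} = ((Set.univ : Set ℝ) ×ˢ ({r} : Set ℝ)) ×ˢ (Set.univ : Set (ℝ×ℝ)) := by
    ext ⟨⟨x1,y1⟩,q2⟩; simp [eq_comm]
  rw [h, Measure.volume_eq_prod, Measure.prod_prod, Measure.volume_eq_prod, Measure.prod_prod]
  simp

lemma null_x2 (r : ℝ) : volume {q : (ℝ×ℝ)×(ℝ×ℝ) | q.2.1 = r} = 0 := by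
  have h : {q : (ℝ×ℝ)×(ℝ×ℝ) | q.2.1 = r} = (Set.univ : Set (ℝ×ℝ)) ×ˢ ((({r} : Set ℝ)) ×ˢ (Set.univ : Set ℝ)) := by
    ext ⟨q1,⟨x2,y2⟩⟩; simp [eq_comm]
  rw [h, Measure.volume_eq_prod, Measure.prod_prod, Measure.volume_eq_prod (α := ℝ), Measure.prod_prod]
  simp

lemma lin_ofReal_sub_left {u v : ℝ} (h : u ≤ v) :
    ∫⁻ y in Set.Icc u v, ENNReal.ofReal (y - u) = ENNReal.ofReal ((v - u)^2 / 2) := by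
  rw [← ofReal_integral_eq_lintegral_ofReal]
  · congr 1
    rw [integral_Icc_eq_integral_Ioc, ← intervalIntegral.integral_of_le h]
    have : (∫ y in u..v, (y - u)) = (v^2 - u^2)/2 - (v - u) * u := by
      rw [intervalIntegral.integral_sub intervalIntegral.intervalIntegrable_id
        (intervalIntegrable_const), integral_id, intervalIntegral.integral_const, smul_eq_mul]
    rw [this]; ring
  · exact (continuous_id.sub continuous_const).integrableOn_Icc
  · filter_upwards [ae_restrict_mem measurableSet_Icc] with y hy
    simp [sub_nonneg, hy.1]

lemma lin_ofReal_sub_right {u v : ℝ} (h : u ≤ v) :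
    ∫⁻ y in Set.Icc u v, ENNReal.ofReal (v - y) = ENNReal.ofReal ((v - u)^2 / 2) := by
  rw [← ofReal_integral_eq_lintegral_ofReal]
  · congr 1
    rw [integral_Icc_eq_integral_Ioc, ← intervalIntegral.integral_of_le h]
    have : (∫ y in u..v, (v - y)) = (v - u) * v - (v^2 - u^2)/2 := by
      rw [intervalIntegral.integral_sub intervalIntegrable_const
        intervalIntegral.intervalIntegrable_id, integral_id, intervalIntegral.integral_const,
        smul_eq_mul]
    rw [this]; ring
  · exact (continuous_const.sub continuous_id).integrableOn_Icc
  · filter_upwards [ae_restrict_mem measurableSet_Icc] with y hy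
    simp [sub_nonneg, hy.2]

lemma S4_empty₁ {a b c d e f g h : ℝ} (hfa : f ≤ a) :
    S4 ∩ ((Set.Icc a b ×ˢ Set.Icc c d) ×ˢ (Set.Icc e f ×ˢ Set.Icc g h)) = ∅ := by
  ext ⟨⟨x1,y1⟩,⟨x2,y2⟩⟩
  simp only [S4, mem_inter_iff, mem_setOf_eq, mem_prod, Set.mem_Icc, mem_empty_iff_false, iff_false]
  rintro ⟨⟨l1, l2, l3⟩, ⟨⟨hx1a, _⟩, _, _⟩, ⟨_, hx2f⟩, _, _⟩
  linarith

lemma S4_empty₂ {a b c d e f g h : ℝ} (hde : d ≤ e) :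
    S4 ∩ ((Set.Icc a b ×ˢ Set.Icc c d) ×ˢ (Set.Icc e f ×ˢ Set.Icc g h)) = ∅ := by
  ext ⟨⟨x1,y1⟩,⟨x2,y2⟩⟩
  simp only [S4, mem_inter_iff, mem_setOf_eq, mem_prod, Set.mem_Icc, mem_empty_iff_false, iff_false]
  rintro ⟨⟨l1, l2, l3⟩, ⟨_, _, hy1d⟩, ⟨hx2e, _⟩, _, _⟩
  linarith

lemma S4_empty₃ {a b c d e f g h : ℝ} (hhc : h ≤ c) :
    S4 ∩ ((Set.Icc a b ×ˢ Set.Icc c d) ×ˢ (Set.Icc e f ×ˢ Set.Icc g h)) = ∅ := by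
  ext ⟨⟨x1,y1⟩,⟨x2,y2⟩⟩
  simp only [S4, mem_inter_iff, mem_setOf_eq, mem_prod, Set.mem_Icc, mem_empty_iff_false, iff_false]
  rintro ⟨⟨l1, l2, l3⟩, ⟨_, hy1c, _⟩, _, _, hy2h⟩
  linarith

lemma volS4_cross {a b c d e f g h : ℝ} (hbe : b ≤ e) (hfc : f ≤ c) (hdg : d ≤ g) :
    volume (S4 ∩ ((Set.Icc a b ×ˢ Set.Icc c d) ×ˢ (Set.Icc e f ×ˢ Set.Icc g h))) =
      ENNReal.ofReal (b-a) * ENNReal.ofReal (d-c) *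
        (ENNReal.ofReal (f-e) * ENNReal.ofReal (h-g)) := by
  set box := (Set.Icc a b ×ˢ Set.Icc c d) ×ˢ (Set.Icc e f ×ˢ Set.Icc g h) with hbox
  have hsub : box \ S4 ⊆ {q : (ℝ×ℝ)×(ℝ×ℝ) | q.1.1 = b} ∪
      ({q : (ℝ×ℝ)×(ℝ×ℝ) | q.2.1 = f} ∪ {q : (ℝ×ℝ)×(ℝ×ℝ) | q.1.2 = d}) := by
    rintro ⟨⟨x1,y1⟩,⟨x2,y2⟩⟩ ⟨hb, hS⟩
    simp only [hbox, mem_prod, Set.mem_Icc] at hb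
    obtain ⟨⟨⟨hx1a, hx1b⟩, hy1c, hy1d⟩, ⟨hx2e, hx2f⟩, hy2g, hy2h⟩ := hb
    simp only [S4, mem_setOf_eq, not_and_or, not_lt] at hS
    rcases hS with h1 | h2 | h3
    · left; show x1 = b; linarith
    · right; left; show x2 = f; linarith
    · right; right; show y1 = d; linarith
  have h0 : volume (box \ S4) = 0 :=
    measure_mono_null hsub
      (measure_union_null (null_x1 b) (measure_union_null (null_x2 f) (null_y1 d)))
  have key := measure_inter_add_diff (μ := volume) box measS4
  rw [h0, add_zero] at key
  rw [inter_comm, key, hbox, Measure.volume_eq_prod, Measure.prod_prod,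
    Measure.volume_eq_prod (α := ℝ), Measure.prod_prod, Measure.prod_prod,
    Real.volume_Icc, Real.volume_Icc, Real.volume_Icc, Real.volume_Icc]

lemma volS4_adj {a b c d g h : ℝ} (hab : a ≤ b) (hbc : b ≤ c) (hcd : c ≤ d) (hdg : d ≤ g)
    (hgh : g ≤ h) :
    volume (S4 ∩ ((Set.Icc a b ×ˢ Set.Icc c d) ×ˢ (Set.Icc c d ×ˢ Set.Icc g h))) =
      ENNReal.ofReal (b-a) * ENNReal.ofReal ((d-c)^2/2) * ENNReal.ofReal (h-g) := by
  set T : Set ((ℝ×ℝ)×(ℝ×ℝ)) :=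
    ((Set.Icc a b ×ˢ Set.Icc c d) ×ˢ (Set.Icc c d ×ˢ Set.Icc g h)) ∩ {q | q.2.1 < q.1.2} with hT
  have hTmeas : MeasurableSet T :=
    (((measurableSet_Icc.prod measurableSet_Icc).prod
      (measurableSet_Icc.prod measurableSet_Icc))).inter
      (measurableSet_lt measurable_snd.fst measurable_fst.snd)
  have h1 : S4 ∩ ((Set.Icc a b ×ˢ Set.Icc c d) ×ˢ (Set.Icc c d ×ˢ Set.Icc g h)) = S4 ∩ T := by
    ext ⟨⟨x1,y1⟩,⟨x2,y2⟩⟩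
    simp only [S4, hT, mem_inter_iff, mem_setOf_eq, mem_prod]
    tauto
  have hdiff : T \ S4 ⊆ {q : (ℝ×ℝ)×(ℝ×ℝ) | q.1.1 = b} ∪ {q : (ℝ×ℝ)×(ℝ×ℝ) | q.1.2 = d} := by
    rintro ⟨⟨x1,y1⟩,⟨x2,y2⟩⟩ ⟨hTm, hS⟩
    simp only [hT, mem_inter_iff, mem_prod, Set.mem_Icc, mem_setOf_eq] at hTm
    obtain ⟨⟨⟨⟨hx1a, hx1b⟩, hy1c, hy1d⟩, ⟨hx2c, hx2d⟩, hy2g, hy2h⟩, hlt⟩ := hTm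
    simp only [S4, mem_setOf_eq, not_and_or, not_lt] at hS
    rcases hS with hs1 | hs2 | hs3
    · left; show x1 = b; linarith
    · exact absurd hlt (not_lt.mpr hs2)
    · right; show y1 = d; linarith
  have h0 : volume (T \ S4) = 0 :=
    measure_mono_null hdiff (measure_union_null (null_x1 b) (null_y1 d))
  have key := measure_inter_add_diff (μ := volume) T measS4
  rw [h0, add_zero] at key
  rw [h1, inter_comm, key]
  -- compute volume T
  rw [Measure.volume_eq_prod, Measure.prod_apply hTmeas]
  have hslice : (fun xy : ℝ×ℝ => (volume : Measure (ℝ×ℝ)) (Prod.mk xy ⁻¹' T)) =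
      (Set.Icc a b ×ˢ Set.Icc c d).indicator
        (fun xy => ENNReal.ofReal (xy.2 - c) * ENNReal.ofReal (h - g)) := by
    funext xy
    by_cases hxy : xy ∈ Set.Icc a b ×ˢ Set.Icc c d
    · rw [indicator_of_mem hxy]
      obtain ⟨hx, hy⟩ := hxy
      have hpre : Prod.mk xy ⁻¹' T = (Set.Ico c xy.2) ×ˢ Set.Icc g h := by
        ext ⟨u,v⟩
        simp only [hT, Set.mem_preimage, mem_inter_iff, mem_prod, mem_setOf_eq, Set.mem_Icc, Set.mem_Ico]
        constructor
        · rintro ⟨⟨_, ⟨hu1, hu2⟩, hv⟩, hlt⟩; exact ⟨⟨hu1, hlt⟩, hv⟩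
        · rintro ⟨⟨hu1, hlt⟩, hv⟩
          exact ⟨⟨⟨hx, hy⟩, ⟨hu1, le_trans hlt.le hy.2⟩, hv⟩, hlt⟩
      rw [hpre, Measure.volume_eq_prod (α := ℝ), Measure.prod_prod, Real.volume_Ico,
        Real.volume_Icc]
    · rw [indicator_of_notMem hxy]
      have hpre : Prod.mk xy ⁻¹' T = ∅ := by
        ext ⟨u,v⟩
        simp only [hT, Set.mem_preimage, mem_inter_iff, mem_prod, mem_setOf_eq,
          mem_empty_iff_false, iff_false]
        rintro ⟨⟨hm1, _⟩, _⟩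
        exact hxy hm1
      rw [hpre]; simp
  rw [hslice, lintegral_indicator (measurableSet_Icc.prod measurableSet_Icc),
    Measure.volume_eq_prod (α := ℝ), ← Measure.prod_restrict]
  have hfg : (fun xy : ℝ×ℝ => ENNReal.ofReal (xy.2 - c) * ENNReal.ofReal (h - g)) =
      fun xy : ℝ×ℝ => (fun _ : ℝ => (1:ENNReal)) xy.1 *
        (fun y => ENNReal.ofReal (y - c) * ENNReal.ofReal (h - g)) xy.2 := by
    funext xy; simp
  rw [hfg, lintegral_prod_mul (f := fun _ : ℝ => (1:ENNReal))
    (g := fun y => ENNReal.ofReal (y - c) * ENNReal.ofReal (h - g))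
    aemeasurable_const (by fun_prop)]
  rw [lintegral_one, Measure.restrict_apply_univ,
    lintegral_mul_const (f := fun y => ENNReal.ofReal (y - c)) _ (by fun_prop),
    lin_ofReal_sub_left hcd, Real.volume_Icc]
  ring

lemma volS4_diag {a b c d : ℝ} (hab : a ≤ b) (hbc : b ≤ c) (hcd : c ≤ d) :
    volume (S4 ∩ ((Set.Icc a b ×ˢ Set.Icc c d) ×ˢ (Set.Icc a b ×ˢ Set.Icc c d))) =
      ENNReal.ofReal ((b-a)^2/2) * ENNReal.ofReal ((d-c)^2/2) := by
  set T : Set ((ℝ×ℝ)×(ℝ×ℝ)) :=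
    ((Set.Icc a b ×ˢ Set.Icc c d) ×ˢ (Set.Icc a b ×ˢ Set.Icc c d)) ∩
      {q | q.1.1 < q.2.1 ∧ q.1.2 < q.2.2} with hT
  have hTmeas : MeasurableSet T :=
    (((measurableSet_Icc.prod measurableSet_Icc).prod
      (measurableSet_Icc.prod measurableSet_Icc))).inter
      ((measurableSet_lt measurable_fst.fst measurable_snd.fst).inter
        (measurableSet_lt measurable_fst.snd measurable_snd.snd))
  have h1 : S4 ∩ ((Set.Icc a b ×ˢ Set.Icc c d) ×ˢ (Set.Icc a b ×ˢ Set.Icc c d)) = S4 ∩ T := by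
    ext ⟨⟨x1,y1⟩,⟨x2,y2⟩⟩
    simp only [S4, hT, mem_inter_iff, mem_setOf_eq, mem_prod]
    tauto
  have hdiff : T \ S4 ⊆ {q : (ℝ×ℝ)×(ℝ×ℝ) | q.2.1 = b} := by
    rintro ⟨⟨x1,y1⟩,⟨x2,y2⟩⟩ ⟨hTm, hS⟩
    simp only [hT, mem_inter_iff, mem_prod, Set.mem_Icc, mem_setOf_eq] at hTm
    obtain ⟨⟨⟨⟨hx1a, hx1b⟩, hy1c, hy1d⟩, ⟨hx2a, hx2b⟩, hy2c, hy2d⟩, hlt1, hlt2⟩ := hTm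
    simp only [S4, mem_setOf_eq, not_and_or, not_lt] at hS
    rcases hS with hs1 | hs2 | hs3
    · exact absurd hlt1 (not_lt.mpr hs1)
    · show x2 = b; linarith
    · exact absurd hlt2 (not_lt.mpr hs3)
  have h0 : volume (T \ S4) = 0 := measure_mono_null hdiff (null_x2 b)
  have key := measure_inter_add_diff (μ := volume) T measS4
  rw [h0, add_zero] at key
  rw [h1, inter_comm, key]
  rw [Measure.volume_eq_prod, Measure.prod_apply hTmeas]
  have hslice : (fun xy : ℝ×ℝ => (volume : Measure (ℝ×ℝ)) (Prod.mk xy ⁻¹' T)) =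
      (Set.Icc a b ×ˢ Set.Icc c d).indicator
        (fun xy => ENNReal.ofReal (b - xy.1) * ENNReal.ofReal (d - xy.2)) := by
    funext xy
    by_cases hxy : xy ∈ Set.Icc a b ×ˢ Set.Icc c d
    · rw [indicator_of_mem hxy]
      obtain ⟨hx, hy⟩ := hxy
      have hpre : Prod.mk xy ⁻¹' T = (Set.Ioc xy.1 b) ×ˢ (Set.Ioc xy.2 d) := by
        ext ⟨u,v⟩
        simp only [hT, Set.mem_preimage, mem_inter_iff, mem_prod, mem_setOf_eq, Set.mem_Icc, Set.mem_Ioc]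
        constructor
        · rintro ⟨⟨_, ⟨hu1, hu2⟩, hv1, hv2⟩, hlt1, hlt2⟩; exact ⟨⟨hlt1, hu2⟩, hlt2, hv2⟩
        · rintro ⟨⟨hlt1, hu2⟩, hlt2, hv2⟩
          exact ⟨⟨⟨hx, hy⟩, ⟨le_trans hx.1 hlt1.le, hu2⟩,
            le_trans hy.1 hlt2.le, hv2⟩, hlt1, hlt2⟩
      rw [hpre, Measure.volume_eq_prod (α := ℝ), Measure.prod_prod, Real.volume_Ioc,
        Real.volume_Ioc]
    · rw [indicator_of_notMem hxy]
      have hpre : Prod.mk xy ⁻¹' T = ∅ := by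
        ext ⟨u,v⟩
        simp only [hT, Set.mem_preimage, mem_inter_iff, mem_prod, mem_setOf_eq,
          mem_empty_iff_false, iff_false]
        rintro ⟨⟨hm1, _⟩, _⟩
        exact hxy hm1
      rw [hpre]; simp
  rw [hslice, lintegral_indicator (measurableSet_Icc.prod measurableSet_Icc),
    Measure.volume_eq_prod (α := ℝ), ← Measure.prod_restrict]
  have hfg : (fun xy : ℝ×ℝ => ENNReal.ofReal (b - xy.1) * ENNReal.ofReal (d - xy.2)) =
      fun xy : ℝ×ℝ => (fun x => ENNReal.ofReal (b - x)) xy.1 *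
        (fun y => ENNReal.ofReal (d - y)) xy.2 := rfl
  rw [hfg, lintegral_prod_mul (f := fun x => ENNReal.ofReal (b - x))
    (g := fun y => ENNReal.ofReal (d - y)) (by fun_prop) (by fun_prop),
    lin_ofReal_sub_right hab, lin_ofReal_sub_right hcd]

end


section ArcCombinatorics
open Set

variable {n : ℕ} {P : Finpartition (Finset.univ : Finset (Fin n))}

lemma isArc_left_unique {i j l : Fin n} (hp : IsArc P i j) (hq : IsArc P i l) : j = l := by
  rcases lt_trichotomy j l with h | h | h
  · exact absurd hp.2.1 (hq.2.2 j hp.1 h)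
  · exact h
  · exact absurd hq.2.1 (hp.2.2 l hq.1 h)

lemma sameBlock_of_right {i k j : Fin n} (hij : SameBlock P i j) (hkj : SameBlock P k j) :
    SameBlock P i k := by
  obtain ⟨B, hB, hiB, hjB⟩ := hij
  obtain ⟨C, hC, hkC, hjC⟩ := hkj
  have hBC : B = C := P.eq_of_mem_parts hB hC hjB hjC
  exact ⟨B, hB, hiB, hBC ▸ hkC⟩

lemma isArc_right_unique {i k j : Fin n} (hp : IsArc P i j) (hq : IsArc P k j) : i = k := by
  rcases lt_trichotomy i k with h | h | h
  · exact absurd (sameBlock_of_right hp.2.1 hq.2.1) (hp.2.2 k h hq.1)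
  · exact h
  · exact absurd (sameBlock_of_right hq.2.1 hp.2.1) (hq.2.2 i h hp.1)

end ArcCombinatorics


section Assembly
open Set

open MeasureTheory Set

lemma vol_sqA_prod_lt_top {n : ℕ} (p : Fin n × Fin n) : volume (sqA n p) < ⊤ := by
  rw [sqA, Measure.volume_eq_prod, Measure.prod_prod, Real.volume_Icc, Real.volume_Icc]
  exact ENNReal.mul_lt_top ENNReal.ofReal_lt_top ENNReal.ofReal_lt_top

lemma muPi_finite {n : ℕ} (P : Finpartition (Finset.univ : Finset (Fin n))) :
    IsFiniteMeasure (muPi P) := by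
  constructor
  rw [muPi, Measure.smul_apply, Measure.finset_sum_apply, smul_eq_mul]
  refine ENNReal.mul_lt_top (by simp) ?_
  refine ENNReal.sum_lt_top.mpr fun p _ => ?_
  rw [Measure.restrict_apply_univ]
  exact vol_sqA_prod_lt_top p

lemma muPi_prod_S4 {n : ℕ} (P : Finpartition (Finset.univ : Finset (Fin n))) :
    ((muPi P).prod (muPi P)) S4 =
      (n : ENNReal) * (n : ENNReal) *
        ∑ p ∈ arcs P, ∑ q ∈ arcs P, volume (S4 ∩ (sqA n p ×ˢ sqA n q)) := by
  haveI := muPi_finite P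
  have hmeas : ∀ q : Fin n × Fin n, Measurable fun x : ℝ×ℝ =>
      (volume.restrict (sqA n q)) (Prod.mk x ⁻¹' S4) :=
    fun q => measurable_measure_prodMk_left measS4
  have hmu_app : ∀ s : Set (ℝ×ℝ), muPi P s =
      (n:ENNReal) * ∑ q ∈ arcs P, (volume.restrict (sqA n q)) s := by
    intro s
    rw [muPi, Measure.smul_apply, Measure.finset_sum_apply, smul_eq_mul]
  rw [Measure.prod_apply measS4]
  calc ∫⁻ x, muPi P (Prod.mk x ⁻¹' S4) ∂(muPi P)
      = ∫⁻ x, ((n:ENNReal) * ∑ q ∈ arcs P, (volume.restrict (sqA n q)) (Prod.mk x ⁻¹' S4))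
          ∂(muPi P) := lintegral_congr fun x => hmu_app _
    _ = (n:ENNReal) * ∫⁻ x, (∑ q ∈ arcs P, (volume.restrict (sqA n q)) (Prod.mk x ⁻¹' S4))
          ∂(muPi P) := lintegral_const_mul _ (Finset.measurable_sum _ fun q _ => hmeas q)
    _ = (n:ENNReal) * ((n:ENNReal) * ∑ p ∈ arcs P, ∫⁻ x,
          (∑ q ∈ arcs P, (volume.restrict (sqA n q)) (Prod.mk x ⁻¹' S4))
          ∂(volume.restrict (sqA n p))) := by
        rw [muPi, lintegral_smul_measure, lintegral_finset_sum_measure, smul_eq_mul]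
    _ = (n : ENNReal) * (n : ENNReal) *
        ∑ p ∈ arcs P, ∑ q ∈ arcs P, volume (S4 ∩ (sqA n p ×ˢ sqA n q)) := by
        rw [mul_assoc]
        congr 1
        congr 1
        refine Finset.sum_congr rfl fun p _ => ?_
        rw [lintegral_finset_sum _ fun q _ => hmeas q]
        refine Finset.sum_congr rfl fun q _ => ?_
        rw [← Measure.prod_apply measS4, Measure.prod_restrict, Measure.restrict_apply measS4,
          ← Measure.volume_eq_prod]

lemma vol_pair {n : ℕ} {P : Finpartition (Finset.univ : Finset (Fin n))}
    {p q : Fin n × Fin n} (hp : p ∈ arcs P) (hq : q ∈ arcs P) :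
    volume (S4 ∩ (sqA n p ×ˢ sqA n q)) =
      ENNReal.ofReal (((if p.1 < q.1 ∧ q.1 < p.2 ∧ p.2 < q.2 then (1:ℝ) else 0) +
        (if p.2 = q.1 then (1/2:ℝ) else 0) + (if p = q then (1/4:ℝ) else 0)) / n^4) := by
  have hpa : IsArc P p.1 p.2 := (Finset.mem_filter.mp hp).2
  have hqa : IsArc P q.1 q.2 := (Finset.mem_filter.mp hq).2
  have hn0 : (0:ℝ) < n := by exact_mod_cast (p.1).pos
  have hne : (n:ℝ) ≠ 0 := ne_of_gt hn0
  have key : ∀ u v : Fin n, u < v → ((u:ℝ)+1)/n ≤ (v:ℝ)/n := by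
    intro u v huv
    have h1 : (u:ℕ) + 1 ≤ (v:ℕ) := Nat.succ_le_of_lt huv
    have h2 : ((u:ℝ)+1) ≤ (v:ℝ) := by exact_mod_cast h1
    exact (div_le_div_iff_of_pos_right hn0).mpr h2
  have self : ∀ u : Fin n, ((u:ℝ))/n ≤ ((u:ℝ)+1)/n :=
    fun u => (div_le_div_iff_of_pos_right hn0).mpr (by linarith)
  rcases lt_trichotomy q.1 p.2 with hkj | hkj | hkj
  · -- q.1 < p.2
    rcases lt_trichotomy p.1 q.1 with hik | hik | hik
    · -- i < k < j : compare p.2 q.2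
      rcases lt_trichotomy p.2 q.2 with hjl | hjl | hjl
      · -- crossing
        have hvol : volume (S4 ∩ (sqA n p ×ˢ sqA n q)) =
            ENNReal.ofReal (((p.1:ℝ)+1)/n - (p.1:ℝ)/n) *
              ENNReal.ofReal (((p.2:ℝ)+1)/n - (p.2:ℝ)/n) *
              (ENNReal.ofReal (((q.1:ℝ)+1)/n - (q.1:ℝ)/n) *
                ENNReal.ofReal (((q.2:ℝ)+1)/n - (q.2:ℝ)/n)) := by
          rw [sqA, sqA]
          exact volS4_cross (key _ _ hik) (key _ _ hkj) (key _ _ hjl)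
        rw [hvol, ← ENNReal.ofReal_mul (sub_nonneg.mpr (self q.1)),
          ← ENNReal.ofReal_mul (sub_nonneg.mpr (self p.1)),
          ← ENNReal.ofReal_mul (mul_nonneg (sub_nonneg.mpr (self p.1))
            (sub_nonneg.mpr (self p.2)))]
        congr 1
        rw [if_pos ⟨hik, hkj, hjl⟩, if_neg (ne_of_gt hkj),
          if_neg (by rintro rfl; exact lt_irrefl _ hik)]
        field_simp
        ring
      · exact absurd (isArc_right_unique hpa (hjl ▸ hqa)) (ne_of_lt hik)
      · -- q.2 < p.2 : empty
        have hempty : S4 ∩ (sqA n p ×ˢ sqA n q) = ∅ := by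
          rw [sqA, sqA]; exact S4_empty₃ (key _ _ hjl)
        rw [hempty, measure_empty]
        rw [if_neg (fun h => lt_asymm hjl h.2.2), if_neg (ne_of_gt hkj),
          if_neg (by rintro rfl; exact lt_irrefl _ hjl)]
        norm_num
    · -- p.1 = q.1 : diagonal
      have hqa' : IsArc P p.1 q.2 := by rw [hik]; exact hqa
      have hjl : p.2 = q.2 := isArc_left_unique hpa hqa'
      have hpq : p = q := Prod.ext hik hjl
      subst hpq
      have hvol : volume (S4 ∩ (sqA n p ×ˢ sqA n p)) =
          ENNReal.ofReal ((((p.1:ℝ)+1)/n - (p.1:ℝ)/n)^2/2) *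
            ENNReal.ofReal ((((p.2:ℝ)+1)/n - (p.2:ℝ)/n)^2/2) := by
        rw [sqA]
        exact volS4_diag (self p.1) (key _ _ hpa.1) (self p.2)
      rw [hvol, ← ENNReal.ofReal_mul (by positivity)]
      congr 1
      rw [if_neg (fun h => lt_irrefl _ h.1), if_neg (ne_of_gt hkj), if_pos rfl]
      field_simp
      ring
    · -- q.1 < p.1 : empty
      have hempty : S4 ∩ (sqA n p ×ˢ sqA n q) = ∅ := by
        rw [sqA, sqA]; exact S4_empty₁ (key _ _ hik)
      rw [hempty, measure_empty]
      rw [if_neg (fun h => lt_asymm hik h.1),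
        if_neg (by intro h; have := hpa.1; rw [h] at this; exact lt_asymm this hik),
        if_neg (by rintro rfl; exact lt_irrefl _ hik)]
      norm_num
  · -- p.2 = q.1 : adjacent
    have hvol : volume (S4 ∩ (sqA n p ×ˢ sqA n q)) =
        ENNReal.ofReal (((p.1:ℝ)+1)/n - (p.1:ℝ)/n) *
          ENNReal.ofReal ((((p.2:ℝ)+1)/n - (p.2:ℝ)/n)^2/2) *
          ENNReal.ofReal (((q.2:ℝ)+1)/n - (q.2:ℝ)/n) := by
      have hlt : p.2 < q.2 := by rw [← hkj]; exact hqa.1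
      rw [sqA, sqA, hkj]
      exact volS4_adj (self p.1) (key _ _ hpa.1) (self p.2) (key _ _ hlt) (self q.2)
    rw [hvol, ← ENNReal.ofReal_mul (sub_nonneg.mpr (self p.1)),
      ← ENNReal.ofReal_mul (mul_nonneg (sub_nonneg.mpr (self p.1)) (by positivity))]
    congr 1
    rw [if_neg (by rintro h; rw [← hkj] at h; exact lt_irrefl _ h.2.1), if_pos hkj.symm,
      if_neg (by rintro rfl; exact ne_of_lt hpa.1 hkj)]
    field_simp
    ring
  · -- p.2 < q.1 : empty
    have hempty : S4 ∩ (sqA n p ×ˢ sqA n q) = ∅ := by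
      rw [sqA, sqA]; exact S4_empty₂ (key _ _ hkj)
    rw [hempty, measure_empty]
    rw [if_neg (fun h => lt_asymm hkj h.2.1), if_neg (ne_of_lt hkj),
      if_neg (by rintro rfl; exact lt_asymm hpa.1 hkj)]
    norm_num

end Assembly


/-- `crs(π) = n² ∫∫ 1[x₁<x₂<y₁<y₂] dμ_π dμ_π − d(π)/4 − #adjacent/2`. -/
theorem stmt16 (n : ℕ) (P : Finpartition (Finset.univ : Finset (Fin n))) :
    (crsP P : ℝ) =
      (n : ℝ) ^ 2 *
          (∫ q : (ℝ × ℝ) × (ℝ × ℝ),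
            (if q.1.1 < q.2.1 ∧ q.2.1 < q.1.2 ∧ q.1.2 < q.2.2 then (1 : ℝ) else 0)
              ∂((muPi P).prod (muPi P)))
        - (dP P : ℝ) / 4 - (adjP P : ℝ) / 2 := by
  classical
  have hfun : (fun q : (ℝ×ℝ)×(ℝ×ℝ) =>
      if q.1.1 < q.2.1 ∧ q.2.1 < q.1.2 ∧ q.1.2 < q.2.2 then (1:ℝ) else 0) = S4.indicator 1 := by
    funext q
    simp only [Set.indicator_apply, Pi.one_apply, S4, Set.mem_setOf_eq]
  rw [hfun, MeasureTheory.integral_indicator_one measS4]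
  rcases Nat.eq_zero_or_pos n with hn | hn
  · subst hn
    have harc : arcs P = ∅ := by
      rw [arcs, Finset.univ_eq_empty, Finset.filter_empty]
    have hzero : muPi P = 0 := by
      rw [muPi, harc, Finset.sum_empty, smul_zero]
    have hA : (arcs P) ×ˢ (arcs P) = ∅ := by rw [harc]; rfl
    rw [crsP, dP, adjP, hA, harc, hzero]
    simp
  · -- main case
    have hn0 : (0:ℝ) < n := by exact_mod_cast hn
    have hne : (n:ℝ) ≠ 0 := ne_of_gt hn0
    set w : (Fin n × Fin n) × (Fin n × Fin n) → ℝ := fun x =>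
      (if x.1.1 < x.2.1 ∧ x.2.1 < x.1.2 ∧ x.1.2 < x.2.2 then (1:ℝ) else 0) +
        (if x.1.2 = x.2.1 then (1/2:ℝ) else 0) + (if x.1 = x.2 then (1/4:ℝ) else 0) with hw
    have hwnn : ∀ x ∈ (arcs P) ×ˢ (arcs P), 0 ≤ w x / (n:ℝ)^4 := by
      intro x _
      have : 0 ≤ w x := by rw [hw]; dsimp only; split_ifs <;> norm_num
      positivity
    have hsum : ∑ p ∈ arcs P, ∑ q ∈ arcs P, volume (S4 ∩ (sqA n p ×ˢ sqA n q)) =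
        ENNReal.ofReal ((∑ x ∈ (arcs P) ×ˢ (arcs P), w x) / (n:ℝ)^4) := by
      rw [← Finset.sum_product']
      rw [Finset.sum_div]
      rw [ENNReal.ofReal_sum_of_nonneg hwnn]
      refine Finset.sum_congr rfl fun x hx => ?_
      obtain ⟨hx1, hx2⟩ := Finset.mem_product.mp hx
      exact vol_pair hx1 hx2
    have hW : ∑ x ∈ (arcs P) ×ˢ (arcs P), w x =
        (crsP P : ℝ) + (adjP P : ℝ) * (1/2) + (dP P : ℝ) * (1/4) := by
      rw [hw]
      dsimp only
      rw [Finset.sum_add_distrib, Finset.sum_add_distrib]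
      congr 1
      · congr 1
        · -- crossing count
          rw [Finset.sum_boole, crsP]
        · -- adjacent count
          rw [← Finset.sum_filter, Finset.sum_const, nsmul_eq_mul, adjP]
      · -- diagonal count
        rw [← Finset.sum_filter, Finset.sum_const, nsmul_eq_mul, dP]
        congr 2
        refine Finset.card_bij (fun x _ => x.1) ?_ ?_ ?_
        · intro x hx
          exact (Finset.mem_product.mp (Finset.mem_filter.mp hx).1).1
        · intro x hx y hy hxy
          have hx2 : x.1 = x.2 := (Finset.mem_filter.mp hx).2
          have hy2 : y.1 = y.2 := (Finset.mem_filter.mp hy).2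
          exact Prod.ext hxy (hx2 ▸ hy2 ▸ hxy)
        · intro b hb
          exact ⟨(b, b), Finset.mem_filter.mpr ⟨Finset.mem_product.mpr ⟨hb, hb⟩, rfl⟩, rfl⟩
    rw [measureReal_def, muPi_prod_S4, hsum]
    have hWnn : 0 ≤ (∑ x ∈ (arcs P) ×ˢ (arcs P), w x) / (n:ℝ)^4 := by
      rw [Finset.sum_div]
      exact Finset.sum_nonneg hwnn
    rw [ENNReal.toReal_mul, ENNReal.toReal_mul, ENNReal.toReal_natCast,
      ENNReal.toReal_ofReal hWnn, hW]
    field_simp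
    ring
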